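/- PBW property: if (h_i)_{i ∈ I} is a basis of H as an F-vector space, then the family (d^r · ι(h_i) · u^s), indexed by (r, i, s) ∈ ℕ × I × ℕ, is a basis of W = W(H, θ, z0, z1) as an F-vector space. -/

import Mathlib

/-!
STATEMENT (PBW property): if `(h_i)_{i ∈ I}` is a basis of `H` as an `F`-vector
space, then the family `(d^r · ι(h_i) · u^s)`, indexed by `(r, i, s) ∈ ℕ × I × ℕ`,
is a basis of `W = W(H, θ, z0, z1)` as an `F`-vector space.
-/

/-- Generators of the triangular generalized Weyl algebra: a copy of `H` plus `d` and `u`. -/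
inductive GWAGen (H : Type) where
  | base : H → GWAGen H
  | d : GWAGen H
  | u : GWAGen H

/-- The defining relations of the triangular GWA `W(H, θ, z0, z1)`:
`ι` is an `F`-algebra map on the copy of `H`, `u·h = θ(h)·u`, `h·d = d·θ(h)`,
and `u·d = z0 + d·z1·u`. -/
inductive GWARel (F : Type) [Field F] (H : Type) [CommRing H] [Algebra F H]
    (θ : H ≃ₐ[F] H) (z0 z1 : H) :
    FreeAlgebra F (GWAGen H) → FreeAlgebra F (GWAGen H) → Prop
  | base_one : GWARel F H θ z0 z1 (FreeAlgebra.ι F (GWAGen.base (1 : H))) 1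
  | base_add (a b : H) : GWARel F H θ z0 z1
      (FreeAlgebra.ι F (GWAGen.base (a + b)))
      (FreeAlgebra.ι F (GWAGen.base a) + FreeAlgebra.ι F (GWAGen.base b))
  | base_mul (a b : H) : GWARel F H θ z0 z1
      (FreeAlgebra.ι F (GWAGen.base (a * b)))
      (FreeAlgebra.ι F (GWAGen.base a) * FreeAlgebra.ι F (GWAGen.base b))
  | base_smul (r : F) (a : H) : GWARel F H θ z0 z1
      (FreeAlgebra.ι F (GWAGen.base (r • a)))
      (r • FreeAlgebra.ι F (GWAGen.base a))
  | u_comm (a : H) : GWARel F H θ z0 z1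
      (FreeAlgebra.ι F GWAGen.u * FreeAlgebra.ι F (GWAGen.base a))
      (FreeAlgebra.ι F (GWAGen.base (θ a)) * FreeAlgebra.ι F GWAGen.u)
  | d_comm (a : H) : GWARel F H θ z0 z1
      (FreeAlgebra.ι F (GWAGen.base a) * FreeAlgebra.ι F GWAGen.d)
      (FreeAlgebra.ι F GWAGen.d * FreeAlgebra.ι F (GWAGen.base (θ a)))
  | ud : GWARel F H θ z0 z1
      (FreeAlgebra.ι F GWAGen.u * FreeAlgebra.ι F GWAGen.d)
      (FreeAlgebra.ι F (GWAGen.base z0) +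
        FreeAlgebra.ι F GWAGen.d * FreeAlgebra.ι F (GWAGen.base z1) * FreeAlgebra.ι F GWAGen.u)

/-- The triangular generalized Weyl algebra `W(H, θ, z0, z1)`, realized as a
`RingQuot` of the free `F`-algebra on the generators. -/
abbrev GWA (F : Type) [Field F] (H : Type) [CommRing H] [Algebra F H]
    (θ : H ≃ₐ[F] H) (z0 z1 : H) : Type :=
  RingQuot (GWARel F H θ z0 z1)

variable (F : Type) [Field F] (H : Type) [CommRing H] [Algebra F H]
variable (θ : H ≃ₐ[F] H) (z0 z1 : H)

/-- The canonical map `ι : H → W`. -/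
noncomputable def GWA.incl (h : H) : GWA F H θ z0 z1 :=
  RingQuot.mkAlgHom F (GWARel F H θ z0 z1) (FreeAlgebra.ι F (GWAGen.base h))

/-- The element `d` of `W`. -/
noncomputable def GWA.dd : GWA F H θ z0 z1 :=
  RingQuot.mkAlgHom F (GWARel F H θ z0 z1) (FreeAlgebra.ι F GWAGen.d)

/-- The element `u` of `W`. -/
noncomputable def GWA.uu : GWA F H θ z0 z1 :=
  RingQuot.mkAlgHom F (GWARel F H θ z0 z1) (FreeAlgebra.ι F GWAGen.u)



section Aux
variable {F : Type} [Field F] {H : Type} [CommRing H] [Algebra F H]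
variable (θ : H ≃ₐ[F] H) (z0 z1 : H)

abbrev GWAM (H : Type) [CommRing H] := (ℕ × ℕ) →₀ H

noncomputable def Lop (h : H) : GWAM H →ₗ[F] GWAM H :=
  Finsupp.lsum F fun rs => Finsupp.lsingle rs ∘ₗ LinearMap.mulLeft F ((θ ^ rs.1) h)

noncomputable def Dop : GWAM H →ₗ[F] GWAM H :=
  Finsupp.lsum F fun rs => Finsupp.lsingle (rs.1 + 1, rs.2)

noncomputable def Urs : ℕ → ℕ → (H →ₗ[F] GWAM H)
  | 0, s => Finsupp.lsingle (0, s + 1) ∘ₗ θ.toLinearMap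
  | (r+1), s => (Finsupp.lsingle (r, s) ∘ₗ LinearMap.mulLeft F ((θ ^ r) z0))
      + (((Dop : GWAM H →ₗ[F] GWAM H) ∘ₗ Lop θ z1) ∘ₗ Urs r s)

noncomputable def Uop : GWAM H →ₗ[F] GWAM H :=
  Finsupp.lsum F fun rs => Urs θ z0 z1 rs.1 rs.2

@[simp] lemma Lop_single (h a : H) (r s : ℕ) :
    Lop θ h (Finsupp.single (r, s) a) = Finsupp.single (r, s) ((θ ^ r) h * a) := by
  simp [Lop]

@[simp] lemma Dop_single (a : H) (r s : ℕ) :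
    (Dop : GWAM H →ₗ[F] GWAM H) (Finsupp.single (r, s) a) = Finsupp.single (r + 1, s) a := by
  simp [Dop]

lemma Uop_single (a : H) (r s : ℕ) :
    Uop θ z0 z1 (Finsupp.single (r, s) a) = Urs θ z0 z1 r s a := by
  simp [Uop]

lemma Uop_single_zero (a : H) (s : ℕ) :
    Uop θ z0 z1 (Finsupp.single (0, s) a) = Finsupp.single (0, s + 1) (θ a) := by
  rw [Uop_single]; rfl

lemma Uop_single_succ (a : H) (r s : ℕ) :
    Uop θ z0 z1 (Finsupp.single (r + 1, s) a) =
      Finsupp.single (r, s) ((θ ^ r) z0 * a)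
        + Dop (F := F) (Lop θ z1 (Uop θ z0 z1 (Finsupp.single (r, s) a))) := by
  rw [Uop_single, Uop_single]; rfl

lemma pow_succ_apply (a : H) (r : ℕ) : (θ ^ (r + 1)) a = (θ ^ r) (θ a) := by
  rw [pow_succ]; rfl

lemma Lop_one : (Lop θ (1 : H) : GWAM H →ₗ[F] GWAM H) = LinearMap.id := by
  refine Finsupp.lhom_ext fun rs a => ?_
  obtain ⟨r, s⟩ := rs
  rw [Lop_single, map_one, one_mul, LinearMap.id_apply]

lemma Lop_add (a b : H) : (Lop θ (a + b) : GWAM H →ₗ[F] GWAM H) = Lop θ a + Lop θ b := by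
  refine Finsupp.lhom_ext fun rs x => ?_
  obtain ⟨r, s⟩ := rs
  rw [Lop_single, LinearMap.add_apply, Lop_single, Lop_single, map_add, add_mul,
    Finsupp.single_add]

lemma Lop_mul (a b : H) :
    (Lop θ (a * b) : GWAM H →ₗ[F] GWAM H) = Lop θ a ∘ₗ Lop θ b := by
  refine Finsupp.lhom_ext fun rs x => ?_
  obtain ⟨r, s⟩ := rs
  rw [Lop_single, LinearMap.comp_apply, Lop_single, Lop_single, map_mul, mul_assoc]

lemma Lop_smul (c : F) (a : H) :
    (Lop θ (c • a) : GWAM H →ₗ[F] GWAM H) = c • Lop θ a := by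
  refine Finsupp.lhom_ext fun rs x => ?_
  obtain ⟨r, s⟩ := rs
  rw [Lop_single, LinearMap.smul_apply, Lop_single, map_smul, smul_mul_assoc,
    Finsupp.smul_single]

lemma Lop_comm (a b : H) (m : GWAM H) :
    Lop θ a (Lop θ b m) = Lop (F := F) θ b (Lop θ a m) := by
  have h := Lop_mul (F := F) θ a b
  have h' := Lop_mul (F := F) θ b a
  rw [mul_comm] at h'
  exact LinearMap.congr_fun (h.symm.trans h') m

lemma Lop_Dop (a : H) (m : GWAM H) :
    Lop θ a ((Dop : GWAM H →ₗ[F] GWAM H) m) = Dop (F := F) (Lop θ (θ a) m) := by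
  induction m using Finsupp.induction_linear with
  | zero => simp
  | add f g hf hg => rw [map_add, map_add, hf, hg, map_add, map_add]
  | single rs x =>
      obtain ⟨r, s⟩ := rs
      rw [Dop_single, Lop_single, Lop_single, Dop_single, pow_succ_apply]

lemma Uop_Lop_single (a x : H) (r s : ℕ) :
    Uop θ z0 z1 (Finsupp.single (r, s) ((θ ^ r) a * x))
      = Lop θ (θ a) (Uop θ z0 z1 (Finsupp.single (r, s) x)) := by
  induction r generalizing a x s with
  | zero =>
      rw [Uop_single_zero, Uop_single_zero, Lop_single, map_mul, pow_zero]
      rfl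
  | succ r ih =>
      rw [Uop_single_succ, Uop_single_succ, map_add]
      congr 1
      · rw [Lop_single, pow_succ_apply θ a r]
        congr 1
        ring
      · rw [pow_succ_apply θ a r, ih (θ a) x s, Lop_comm θ z1, ← Lop_Dop]

lemma Uop_Lop (a : H) (m : GWAM H) :
    Uop θ z0 z1 (Lop θ a m) = Lop θ (θ a) (Uop θ z0 z1 m) := by
  induction m using Finsupp.induction_linear with
  | zero => simp
  | add f g hf hg => simp only [map_add, hf, hg]
  | single rs x =>
      obtain ⟨r, s⟩ := rs
      rw [Lop_single, Uop_Lop_single]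

lemma Uop_Dop (m : GWAM H) :
    Uop θ z0 z1 ((Dop : GWAM H →ₗ[F] GWAM H) m)
      = Lop θ z0 m + Dop (F := F) (Lop θ z1 (Uop θ z0 z1 m)) := by
  induction m using Finsupp.induction_linear with
  | zero => simp
  | add f g hf hg =>
      simp only [map_add, hf, hg]
      abel
  | single rs x =>
      obtain ⟨r, s⟩ := rs
      rw [Dop_single, Uop_single_succ, Lop_single]

end Aux

section Rep
variable {F : Type} [Field F] {H : Type} [CommRing H] [Algebra F H]
variable (θ : H ≃ₐ[F] H) (z0 z1 : H)

noncomputable def genOp : GWAGen H → Module.End F (GWAM H)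
  | .base h => Lop θ h
  | .d => Dop
  | .u => Uop θ z0 z1

noncomputable def ρfree : FreeAlgebra F (GWAGen H) →ₐ[F] Module.End F (GWAM H) :=
  FreeAlgebra.lift F (genOp θ z0 z1)

variable (F H) in
lemma ρrel : ∀ ⦃x y⦄, GWARel F H θ z0 z1 x y → ρfree θ z0 z1 x = ρfree θ z0 z1 y := by
  intro x y rel
  cases rel with
  | base_one =>
      rw [ρfree, FreeAlgebra.lift_ι_apply, map_one]
      exact Lop_one θ
  | base_add a b =>
      simp only [ρfree, FreeAlgebra.lift_ι_apply, map_add]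
      exact Lop_add θ a b
  | base_mul a b =>
      simp only [ρfree, FreeAlgebra.lift_ι_apply, map_mul]
      show Lop θ (a * b) = Lop θ a * Lop θ b
      rw [Lop_mul]; rfl
  | base_smul r a =>
      simp only [ρfree, FreeAlgebra.lift_ι_apply, map_smul]
      exact Lop_smul θ r a
  | u_comm a =>
      simp only [ρfree, map_mul, FreeAlgebra.lift_ι_apply]
      show Uop θ z0 z1 * Lop θ a = Lop θ (θ a) * Uop θ z0 z1
      refine LinearMap.ext fun m => ?_
      exact Uop_Lop θ z0 z1 a m
  | d_comm a =>
      simp only [ρfree, map_mul, FreeAlgebra.lift_ι_apply]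
      show Lop θ a * Dop = Dop * Lop θ (θ a)
      refine LinearMap.ext fun m => ?_
      exact Lop_Dop θ a m
  | ud =>
      simp only [ρfree, map_mul, map_add, FreeAlgebra.lift_ι_apply]
      show Uop θ z0 z1 * Dop = Lop θ z0 + Dop * Lop θ z1 * Uop θ z0 z1
      refine LinearMap.ext fun m => ?_
      exact Uop_Dop θ z0 z1 m

variable (F H) in
noncomputable def ρ : GWA F H θ z0 z1 →ₐ[F] Module.End F (GWAM H) :=
  RingQuot.liftAlgHom F ⟨ρfree θ z0 z1, ρrel F H θ z0 z1⟩

@[simp] lemma ρ_incl (h : H) : ρ F H θ z0 z1 (GWA.incl F H θ z0 z1 h) = Lop θ h := by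
  rw [ρ, GWA.incl, RingQuot.liftAlgHom_mkAlgHom_apply, ρfree, FreeAlgebra.lift_ι_apply]
  rfl

@[simp] lemma ρ_dd : ρ F H θ z0 z1 (GWA.dd F H θ z0 z1) = Dop := by
  rw [ρ, GWA.dd, RingQuot.liftAlgHom_mkAlgHom_apply, ρfree, FreeAlgebra.lift_ι_apply]
  rfl

@[simp] lemma ρ_uu : ρ F H θ z0 z1 (GWA.uu F H θ z0 z1) = Uop θ z0 z1 := by
  rw [ρ, GWA.uu, RingQuot.liftAlgHom_mkAlgHom_apply, ρfree, FreeAlgebra.lift_ι_apply]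
  rfl

variable (F H) in
noncomputable def evW : GWA F H θ z0 z1 →ₗ[F] GWAM H :=
  LinearMap.applyₗ (Finsupp.single ((0 : ℕ), (0 : ℕ)) (1 : H)) ∘ₗ (ρ F H θ z0 z1).toLinearMap

lemma Uop_pow (s t : ℕ) :
    (Uop θ z0 z1 ^ s) (Finsupp.single ((0 : ℕ), t) (1 : H))
      = Finsupp.single ((0 : ℕ), t + s) (1 : H) := by
  induction s generalizing t with
  | zero => simp
  | succ s ih =>
      have ht : t + 1 + s = t + (s + 1) := by omega
      rw [pow_succ, Module.End.mul_apply, Uop_single_zero, map_one, ih, ht]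

lemma Dop_pow (r t s : ℕ) (a : H) :
    ((Dop : GWAM H →ₗ[F] GWAM H) ^ r) (Finsupp.single (t, s) a)
      = Finsupp.single (t + r, s) a := by
  induction r generalizing t with
  | zero => simp
  | succ r ih =>
      have ht : t + 1 + r = t + (r + 1) := by omega
      rw [pow_succ, Module.End.mul_apply, Dop_single, ih, ht]

lemma evW_mon (r s : ℕ) (h : H) :
    evW F H θ z0 z1 ((GWA.dd F H θ z0 z1) ^ r * GWA.incl F H θ z0 z1 h *
        (GWA.uu F H θ z0 z1) ^ s) = Finsupp.single (r, s) h := by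
  rw [evW]
  simp only [LinearMap.comp_apply, AlgHom.toLinearMap_apply, map_mul, map_pow,
    ρ_incl, ρ_dd, ρ_uu]
  show ((Dop : GWAM H →ₗ[F] GWAM H) ^ r * Lop θ h * Uop θ z0 z1 ^ s)
      (Finsupp.single ((0 : ℕ), (0 : ℕ)) (1 : H)) = _
  rw [Module.End.mul_apply, Module.End.mul_apply, Uop_pow, Lop_single, Dop_pow, pow_zero,
    AlgEquiv.one_apply, mul_one]
  simp

end Rep

section WIdent
variable {F : Type} [Field F] {H : Type} [CommRing H] [Algebra F H]
variable (θ : H ≃ₐ[F] H) (z0 z1 : H)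

local notation "mk" => RingQuot.mkAlgHom F (GWARel F H θ z0 z1)

variable (F H)

lemma incl_one : GWA.incl F H θ z0 z1 1 = 1 := by
  simp only [GWA.incl]
  rw [← map_one (RingQuot.mkAlgHom F (GWARel F H θ z0 z1))]
  exact RingQuot.mkAlgHom_rel F GWARel.base_one

lemma incl_add (a b : H) : GWA.incl F H θ z0 z1 (a + b)
    = GWA.incl F H θ z0 z1 a + GWA.incl F H θ z0 z1 b := by
  simp only [GWA.incl]
  rw [← map_add]
  exact RingQuot.mkAlgHom_rel F (GWARel.base_add a b)

lemma incl_mul (a b : H) : GWA.incl F H θ z0 z1 (a * b)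
    = GWA.incl F H θ z0 z1 a * GWA.incl F H θ z0 z1 b := by
  simp only [GWA.incl]
  rw [← map_mul]
  exact RingQuot.mkAlgHom_rel F (GWARel.base_mul a b)

lemma incl_smul (c : F) (a : H) : GWA.incl F H θ z0 z1 (c • a)
    = c • GWA.incl F H θ z0 z1 a := by
  simp only [GWA.incl]
  rw [← map_smul (RingQuot.mkAlgHom F (GWARel F H θ z0 z1))]
  exact RingQuot.mkAlgHom_rel F (GWARel.base_smul c a)

noncomputable def inclLin : H →ₗ[F] GWA F H θ z0 z1 where
  toFun := GWA.incl F H θ z0 z1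
  map_add' := incl_add F H θ z0 z1
  map_smul' := incl_smul F H θ z0 z1

lemma u_comm_W (a : H) : GWA.uu F H θ z0 z1 * GWA.incl F H θ z0 z1 a
    = GWA.incl F H θ z0 z1 (θ a) * GWA.uu F H θ z0 z1 := by
  simp only [GWA.uu, GWA.incl]
  rw [← map_mul, ← map_mul]
  exact RingQuot.mkAlgHom_rel F (GWARel.u_comm a)

lemma d_comm_W (a : H) : GWA.incl F H θ z0 z1 a * GWA.dd F H θ z0 z1
    = GWA.dd F H θ z0 z1 * GWA.incl F H θ z0 z1 (θ a) := by
  simp only [GWA.dd, GWA.incl]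
  rw [← map_mul, ← map_mul]
  exact RingQuot.mkAlgHom_rel F (GWARel.d_comm a)

lemma ud_W : GWA.uu F H θ z0 z1 * GWA.dd F H θ z0 z1
    = GWA.incl F H θ z0 z1 z0 +
      GWA.dd F H θ z0 z1 * GWA.incl F H θ z0 z1 z1 * GWA.uu F H θ z0 z1 := by
  simp only [GWA.dd, GWA.uu, GWA.incl]
  rw [← map_mul, ← map_mul, ← map_mul, ← map_add]
  exact RingQuot.mkAlgHom_rel F GWARel.ud

lemma incl_dpow (a : H) (r : ℕ) :
    GWA.incl F H θ z0 z1 a * (GWA.dd F H θ z0 z1) ^ r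
      = (GWA.dd F H θ z0 z1) ^ r * GWA.incl F H θ z0 z1 ((θ ^ r) a) := by
  induction r generalizing a with
  | zero => simp
  | succ r ih =>
      rw [pow_succ, ← mul_assoc, ih a, mul_assoc, d_comm_W, ← mul_assoc, ← pow_succ]
      congr 2
      rw [pow_succ']
      rfl

end WIdent

theorem pbw_basis (I : Type) (b : Module.Basis I F H) :
    LinearIndependent F (fun p : ℕ × I × ℕ =>
        (GWA.dd F H θ z0 z1) ^ p.1 * GWA.incl F H θ z0 z1 (b p.2.1) *
          (GWA.uu F H θ z0 z1) ^ p.2.2) ∧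
    Submodule.span F
        (Set.range (fun p : ℕ × I × ℕ =>
          (GWA.dd F H θ z0 z1) ^ p.1 * GWA.incl F H θ z0 z1 (b p.2.1) *
            (GWA.uu F H θ z0 z1) ^ p.2.2)) = ⊤ := by
  set mon : ℕ × I × ℕ → GWA F H θ z0 z1 := fun p =>
    (GWA.dd F H θ z0 z1) ^ p.1 * GWA.incl F H θ z0 z1 (b p.2.1) *
      (GWA.uu F H θ z0 z1) ^ p.2.2 with hmon
  constructor
  · -- linear independence
    apply LinearIndependent.of_comp (evW F H θ z0 z1)
    have hcomp : (⇑(evW F H θ z0 z1) ∘ mon) = fun p : ℕ × I × ℕ =>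
        Finsupp.single (p.1, p.2.2) (b p.2.1) := by
      funext p
      exact evW_mon θ z0 z1 p.1 p.2.2 (b p.2.1)
    rw [hcomp]
    -- the target family is a reindexing of a basis of `GWAM H`
    let B : Module.Basis ((_ : ℕ × ℕ) × I) F (GWAM H) := Finsupp.basis (fun _ => b)
    have hinj : Function.Injective
        (fun p : ℕ × I × ℕ => (⟨(p.1, p.2.2), p.2.1⟩ : (_ : ℕ × ℕ) × I)) := by
      rintro ⟨r, i, s⟩ ⟨r', i', s'⟩ h
      simp only [Sigma.mk.inj_iff, Prod.mk.injEq, heq_eq_eq] at h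
      obtain ⟨⟨rfl, rfl⟩, rfl⟩ := h
      rfl
    have := B.linearIndependent.comp _ hinj
    convert this using 1
    funext p
    simp only [Function.comp_apply, B, Finsupp.coe_basis]
  · -- spanning
    set S := Submodule.span F (Set.range mon) with hS
    have memS : ∀ (r s : ℕ) (h : H),
        (GWA.dd F H θ z0 z1) ^ r * GWA.incl F H θ z0 z1 h * (GWA.uu F H θ z0 z1) ^ s ∈ S := by
      intro r s h
      let T : H →ₗ[F] GWA F H θ z0 z1 :=
        LinearMap.mulRight F ((GWA.uu F H θ z0 z1) ^ s) ∘ₗ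
          LinearMap.mulLeft F ((GWA.dd F H θ z0 z1) ^ r) ∘ₗ inclLin F H θ z0 z1
      have hT : ∀ x ∈ Submodule.span F (Set.range ⇑b), T x ∈ S := by
        intro x hx
        refine Submodule.span_induction ?_ ?_ ?_ ?_ hx
        · rintro _ ⟨i, rfl⟩
          exact Submodule.subset_span ⟨(r, i, s), rfl⟩
        · rw [map_zero]; exact S.zero_mem
        · intro x y _ _ hx hy; rw [map_add]; exact S.add_mem hx hy
        · intro c x _ hx; rw [map_smul]; exact S.smul_mem c hx
      have hmem : h ∈ Submodule.span F (Set.range ⇑b) := by rw [b.span_eq]; trivial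
      simpa [T, LinearMap.mulRight_apply, LinearMap.mulLeft_apply, inclLin] using hT h hmem
    have stabIncl : ∀ (a : H) (w : GWA F H θ z0 z1), w ∈ S →
        GWA.incl F H θ z0 z1 a * w ∈ S := by
      intro a w hw
      refine Submodule.span_induction ?_ ?_ ?_ ?_ hw
      · rintro _ ⟨⟨r, i, s⟩, rfl⟩
        have key : GWA.incl F H θ z0 z1 a *
            ((GWA.dd F H θ z0 z1) ^ r * GWA.incl F H θ z0 z1 (b i) * (GWA.uu F H θ z0 z1) ^ s)
            = (GWA.dd F H θ z0 z1) ^ r * GWA.incl F H θ z0 z1 ((θ ^ r) a * b i) *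
              (GWA.uu F H θ z0 z1) ^ s := by
          rw [← mul_assoc, ← mul_assoc, incl_dpow, mul_assoc ((GWA.dd F H θ z0 z1) ^ r),
            ← incl_mul]
        simpa [hmon] using key ▸ memS r s ((θ ^ r) a * b i)
      · rw [mul_zero]; exact S.zero_mem
      · intro x y _ _ hx hy; rw [mul_add]; exact S.add_mem hx hy
      · intro c x _ hx; rw [mul_smul_comm]; exact S.smul_mem c hx
    have stabD : ∀ (w : GWA F H θ z0 z1), w ∈ S → GWA.dd F H θ z0 z1 * w ∈ S := by
      intro w hw
      refine Submodule.span_induction ?_ ?_ ?_ ?_ hw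
      · rintro _ ⟨⟨r, i, s⟩, rfl⟩
        have key : GWA.dd F H θ z0 z1 *
            ((GWA.dd F H θ z0 z1) ^ r * GWA.incl F H θ z0 z1 (b i) * (GWA.uu F H θ z0 z1) ^ s)
            = (GWA.dd F H θ z0 z1) ^ (r + 1) * GWA.incl F H θ z0 z1 (b i) *
              (GWA.uu F H θ z0 z1) ^ s := by
          rw [← mul_assoc, ← mul_assoc, ← pow_succ']
        simpa [hmon] using key ▸ memS (r + 1) s (b i)
      · rw [mul_zero]; exact S.zero_mem
      · intro x y _ _ hx hy; rw [mul_add]; exact S.add_mem hx hy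
      · intro c x _ hx; rw [mul_smul_comm]; exact S.smul_mem c hx
    have uMon : ∀ (r s : ℕ) (h : H),
        GWA.uu F H θ z0 z1 *
          ((GWA.dd F H θ z0 z1) ^ r * GWA.incl F H θ z0 z1 h * (GWA.uu F H θ z0 z1) ^ s) ∈ S := by
      intro r
      induction r with
      | zero =>
          intro s h
          have key : GWA.uu F H θ z0 z1 *
              ((GWA.dd F H θ z0 z1) ^ 0 * GWA.incl F H θ z0 z1 h * (GWA.uu F H θ z0 z1) ^ s)
              = (GWA.dd F H θ z0 z1) ^ 0 * GWA.incl F H θ z0 z1 (θ h) *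
                (GWA.uu F H θ z0 z1) ^ (s + 1) := by
            rw [pow_zero, one_mul, one_mul, ← mul_assoc, u_comm_W, mul_assoc, ← pow_succ']
          rw [key]
          exact memS 0 (s + 1) (θ h)
      | succ r ih =>
          intro s h
          have step : (GWA.dd F H θ z0 z1) ^ (r + 1) * GWA.incl F H θ z0 z1 h *
              (GWA.uu F H θ z0 z1) ^ s
              = GWA.dd F H θ z0 z1 *
                ((GWA.dd F H θ z0 z1) ^ r * GWA.incl F H θ z0 z1 h *
                  (GWA.uu F H θ z0 z1) ^ s) := by
            rw [pow_succ', mul_assoc (GWA.dd F H θ z0 z1) ((GWA.dd F H θ z0 z1) ^ r),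
              mul_assoc (GWA.dd F H θ z0 z1)]
          have expand : GWA.uu F H θ z0 z1 *
              ((GWA.dd F H θ z0 z1) ^ (r + 1) * GWA.incl F H θ z0 z1 h *
                (GWA.uu F H θ z0 z1) ^ s)
              = GWA.incl F H θ z0 z1 z0 *
                  ((GWA.dd F H θ z0 z1) ^ r * GWA.incl F H θ z0 z1 h *
                    (GWA.uu F H θ z0 z1) ^ s)
                + GWA.dd F H θ z0 z1 * (GWA.incl F H θ z0 z1 z1 *
                    (GWA.uu F H θ z0 z1 *
                      ((GWA.dd F H θ z0 z1) ^ r * GWA.incl F H θ z0 z1 h *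
                        (GWA.uu F H θ z0 z1) ^ s))) := by
            rw [step, ← mul_assoc, ud_W, add_mul]
            congr 1
            rw [mul_assoc, mul_assoc]
          rw [expand]
          exact S.add_mem (stabIncl z0 _ (memS r s h))
            (stabD _ (stabIncl z1 _ (ih s h)))
    have stabU : ∀ (w : GWA F H θ z0 z1), w ∈ S → GWA.uu F H θ z0 z1 * w ∈ S := by
      intro w hw
      refine Submodule.span_induction ?_ ?_ ?_ ?_ hw
      · rintro _ ⟨⟨r, i, s⟩, rfl⟩
        exact uMon r s (b i)
      · rw [mul_zero]; exact S.zero_mem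
      · intro x y _ _ hx hy; rw [mul_add]; exact S.add_mem hx hy
      · intro c x _ hx; rw [mul_smul_comm]; exact S.smul_mem c hx
    have one_mem : (1 : GWA F H θ z0 z1) ∈ S := by
      have := memS 0 0 1
      simpa [incl_one] using this
    have main : ∀ x : FreeAlgebra F (GWAGen H), ∀ w ∈ S,
        RingQuot.mkAlgHom F (GWARel F H θ z0 z1) x * w ∈ S := by
      intro x
      induction x using FreeAlgebra.induction with
      | grade0 c =>
          intro w hw
          rw [AlgHom.commutes, ← Algebra.smul_def]
          exact S.smul_mem c hw
      | grade1 g =>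
          cases g with
          | base h => exact fun w hw => stabIncl h w hw
          | d => exact fun w hw => stabD w hw
          | u => exact fun w hw => stabU w hw
      | mul a c ha hc =>
          intro w hw
          rw [map_mul, mul_assoc]
          exact ha _ (hc w hw)
      | add a c ha hc =>
          intro w hw
          rw [map_add, add_mul]
          exact S.add_mem (ha w hw) (hc w hw)
    rw [eq_top_iff]
    rintro w -
    obtain ⟨x, rfl⟩ := RingQuot.mkAlgHom_surjective F (GWARel F H θ z0 z1) w
    have := main x 1 one_mem
    rwa [mul_one] at this
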